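/- Let K be Stonian with Bade-complete Boolean algebra of idempotents B acting on a real Banach C(K)-module X, and let x ∈ X, x' ∈ X'. Define μ(a) = x'(m(a)x) for a ∈ C(K). Then there exists an idempotent e₊ ∈ B such that the functionals a ↦ x'(m(a e₊)x) and a ↦ −x'(m(a(1−e₊))x) are both positive linear functionals on C(K), realizing the Jordan decomposition μ⁺ = μ_{e₊x,x'} and μ⁻ = −μ_{(1−e₊)x,x'}. -/

import Mathlib

open Filter Topology

/-- The Boolean algebra of idempotents of `C(K)` is Bade complete on `X`. -/
def BadeComplete {K X : Type*} [TopologicalSpace K] [CompactSpace K] [T2Space K]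
    [NormedAddCommGroup X] [NormedSpace ℝ X] [CompleteSpace X]
    (m : C(K, ℝ) →ₐ[ℝ] (X →L[ℝ] X)) : Prop :=
  ∀ S : Set C(K, ℝ), (∀ e ∈ S, e * e = e) → S.Nonempty → DirectedOn (· ≤ ·) S →
    ∀ E : C(K, ℝ), E * E = E → IsLUB S E →
      ∀ x : X, Filter.Tendsto (fun e : S => m (e : C(K, ℝ)) x) Filter.atTop (nhds (m E x))

set_option linter.unusedSectionVars false
open Set

section Ind
variable {K : Type*} [TopologicalSpace K]

open Classical in
/-- Indicator of a set as a continuous map (0 unless clopen). -/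
noncomputable def cind (U : Set K) : C(K, ℝ) :=
  if h : IsClopen U then
    ⟨U.indicator 1, continuous_indicator (by simp [h]) continuous_const.continuousOn⟩
  else 0

lemma cind_coe {U : Set K} (h : IsClopen U) : ⇑(cind U) = U.indicator 1 := by
  simp [cind, h]

lemma cind_apply_of_mem {U : Set K} (h : IsClopen U) {y : K} (hy : y ∈ U) :
    cind U y = 1 := by simp [cind_coe h, Set.indicator_of_mem hy]

lemma cind_apply_of_not_mem {U : Set K} (h : IsClopen U) {y : K} (hy : y ∉ U) :
    cind U y = 0 := by simp [cind_coe h, Set.indicator_of_notMem hy]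

lemma cind_mul {U V : Set K} (hU : IsClopen U) (hV : IsClopen V) :
    cind U * cind V = cind (U ∩ V) := by
  ext y
  by_cases hyU : y ∈ U <;> by_cases hyV : y ∈ V <;>
    simp_all [ContinuousMap.mul_apply, cind_apply_of_mem, cind_apply_of_not_mem,
      hU, hV, hU.inter hV, Set.mem_inter_iff]

lemma cind_idem {U : Set K} (h : IsClopen U) : cind U * cind U = cind U := by
  rw [cind_mul h h, Set.inter_self]

lemma cind_nonneg {U : Set K} (h : IsClopen U) : 0 ≤ cind U := by
  rw [ContinuousMap.le_def]; intro y
  by_cases hy : y ∈ U <;>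
    simp [cind_apply_of_mem h, cind_apply_of_not_mem h, hy, zero_le_one]

lemma cind_le_one {U : Set K} (h : IsClopen U) : cind U ≤ 1 := by
  rw [ContinuousMap.le_def]; intro y
  by_cases hy : y ∈ U <;>
    simp [cind_apply_of_mem h, cind_apply_of_not_mem h, hy, zero_le_one]

lemma cind_mono {U V : Set K} (hU : IsClopen U) (hV : IsClopen V) (hUV : U ⊆ V) :
    cind U ≤ cind V := by
  rw [ContinuousMap.le_def]; intro y
  by_cases hy : y ∈ U
  · rw [cind_apply_of_mem hU hy, cind_apply_of_mem hV (hUV hy)]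
  · rw [cind_apply_of_not_mem hU hy]
    by_cases hy' : y ∈ V <;>
      simp [cind_apply_of_mem hV, cind_apply_of_not_mem hV, hy', zero_le_one]

lemma cind_empty : cind (∅ : Set K) = 0 := by
  ext y; simp [cind_apply_of_not_mem isClopen_empty]

lemma cind_compl {U : Set K} (h : IsClopen U) : cind Uᶜ = 1 - cind U := by
  ext y
  by_cases hy : y ∈ U <;>
    simp [cind_apply_of_mem, cind_apply_of_not_mem, h, h.compl, hy]

lemma cind_union {U V : Set K} (hU : IsClopen U) (hV : IsClopen V) (hd : Disjoint U V) :
    cind (U ∪ V) = cind U + cind V := by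
  ext y
  by_cases hyU : y ∈ U <;> by_cases hyV : y ∈ V
  · exact absurd (Set.disjoint_left.1 hd hyU hyV) (fun h => h)
  all_goals
    simp_all [ContinuousMap.add_apply, cind_apply_of_mem, cind_apply_of_not_mem,
      hU, hV, hU.union hV, Set.mem_union]

lemma closure_inter_clopen {V A : Set K} (hV : IsClopen V) :
    closure (V ∩ A) = V ∩ closure A := by
  apply subset_antisymm
  · exact closure_minimal (Set.inter_subset_inter_right V subset_closure)
      (hV.isClosed.inter isClosed_closure)
  · exact hV.isOpen.inter_closure

end Ind

section Net
variable {K X : Type*} [TopologicalSpace K] [CompactSpace K] [T2Space K]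
  [NormedAddCommGroup X] [NormedSpace ℝ X] [CompleteSpace X]

lemma isLUB_cind {𝒟 : Set (Set K)} (hne : 𝒟.Nonempty) (hcl : ∀ U ∈ 𝒟, IsClopen U)
    (hE : IsClopen (closure (⋃₀ 𝒟))) :
    IsLUB {e : C(K, ℝ) | ∃ U ∈ 𝒟, e = cind U} (cind (closure (⋃₀ 𝒟))) := by
  constructor
  · rintro e ⟨U, hU, rfl⟩
    exact cind_mono (hcl U hU) hE ((Set.subset_sUnion_of_mem hU).trans subset_closure)
  · intro g hg
    rw [ContinuousMap.le_def]
    intro y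
    obtain ⟨U₀, hU₀⟩ := hne
    have hg0 : ∀ z, (0:ℝ) ≤ g z := by
      intro z
      have := (ContinuousMap.le_def.1 (hg ⟨U₀, hU₀, rfl⟩)) z
      by_cases hz : z ∈ U₀
      · rw [cind_apply_of_mem (hcl U₀ hU₀) hz] at this; linarith
      · rwa [cind_apply_of_not_mem (hcl U₀ hU₀) hz] at this
    by_cases hy : y ∈ closure (⋃₀ 𝒟)
    · rw [cind_apply_of_mem hE hy]
      have hsub : ⋃₀ 𝒟 ⊆ {z | 1 ≤ g z} := by
        rintro z ⟨U, hU, hz⟩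
        have := (ContinuousMap.le_def.1 (hg ⟨U, hU, rfl⟩)) z
        rwa [cind_apply_of_mem (hcl U hU) hz] at this
      have hclosed : IsClosed {z | 1 ≤ g z} := isClosed_le continuous_const g.continuous
      exact (closure_minimal hsub hclosed) hy
    · rw [cind_apply_of_not_mem hE hy]; exact hg0 y

lemma bade_net (m : C(K, ℝ) →ₐ[ℝ] (X →L[ℝ] X)) (hBade : BadeComplete m)
    (x : X) (x' : X →L[ℝ] ℝ) (c : ℝ)
    (𝒟 : Set (Set K)) (hne : 𝒟.Nonempty) (hcl : ∀ U ∈ 𝒟, IsClopen U)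
    (hdir : DirectedOn (· ⊆ ·) 𝒟)
    (hE : IsClopen (closure (⋃₀ 𝒟)))
    (hc : ∀ U ∈ 𝒟, c ≤ x' (m (cind U) x)) :
    c ≤ x' (m (cind (closure (⋃₀ 𝒟))) x) := by
  set S : Set C(K, ℝ) := {e : C(K, ℝ) | ∃ U ∈ 𝒟, e = cind U} with hS
  have hidem : ∀ e ∈ S, e * e = e := by rintro e ⟨U, hU, rfl⟩; exact cind_idem (hcl U hU)
  have hSne : S.Nonempty := by obtain ⟨U, hU⟩ := hne; exact ⟨cind U, U, hU, rfl⟩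
  have hSdir : DirectedOn (· ≤ ·) S := by
    rintro e ⟨U, hU, rfl⟩ f ⟨V, hV, rfl⟩
    obtain ⟨W, hW, hUW, hVW⟩ := hdir U hU V hV
    exact ⟨cind W, ⟨W, hW, rfl⟩, cind_mono (hcl U hU) (hcl W hW) hUW,
      cind_mono (hcl V hV) (hcl W hW) hVW⟩
  have hlub := isLUB_cind hne hcl hE
  have hT := hBade S hidem hSne hSdir (cind (closure (⋃₀ 𝒟))) (cind_idem hE) hlub x
  have hT2 : Filter.Tendsto (fun e : S => x' (m (e : C(K, ℝ)) x)) Filter.atTop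
      (nhds (x' (m (cind (closure (⋃₀ 𝒟))) x))) := (x'.continuous.tendsto _).comp hT
  haveI : Nonempty S := hSne.to_subtype
  haveI : IsDirected S (· ≤ ·) := by
    constructor
    rintro ⟨e, he⟩ ⟨f, hf⟩
    obtain ⟨g, hg, hge, hgf⟩ := hSdir e he f hf
    exact ⟨⟨g, hg⟩, hge, hgf⟩
  haveI : (Filter.atTop : Filter S).NeBot := Filter.atTop_neBot_iff.2 ⟨‹_›, ‹_›⟩
  refine ge_of_tendsto' hT2 ?_
  rintro ⟨e, U, hU, rfl⟩
  exact hc U hU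

/-- μ as a linear functional. -/
noncomputable def muLin (m : C(K, ℝ) →ₐ[ℝ] (X →L[ℝ] X)) (x : X) (x' : X →L[ℝ] ℝ) :
    C(K, ℝ) →ₗ[ℝ] ℝ where
  toFun a := x' (m a x)
  map_add' a b := by simp [map_add]
  map_smul' r a := by simp [map_smul]

lemma mu_bound (m : C(K, ℝ) →ₐ[ℝ] (X →L[ℝ] X)) (hm : ∀ a : C(K, ℝ), ‖m a‖ = ‖a‖)
    (x : X) (x' : X →L[ℝ] ℝ) (a : C(K, ℝ)) :
    |x' (m a x)| ≤ ‖x'‖ * ‖x‖ * ‖a‖ := by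
  calc |x' (m a x)| ≤ ‖x'‖ * ‖m a x‖ := x'.le_opNorm _
    _ ≤ ‖x'‖ * (‖m a‖ * ‖x‖) := by
        gcongr
        exact (m a).le_opNorm x
    _ = ‖x'‖ * ‖x‖ * ‖a‖ := by rw [hm]; ring

end Net

set_option linter.unusedSectionVars false

lemma filter_downward {N : ℕ} {P : ℕ → Prop} [DecidablePred P]
    (hP : ∀ j k, j ≤ k → P k → P j) :
    (Finset.range N).filter P = Finset.range (((Finset.range N).filter P).card) := by
  induction N with
  | zero => simp
  | succ n ih =>
    by_cases h : P n
    · have heq : (Finset.range (n+1)).filter P = Finset.range (n+1) :=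
        Finset.filter_true_of_mem (fun k hk => hP k n (Nat.lt_succ_iff.1 (Finset.mem_range.1 hk)) h)
      rw [heq, Finset.card_range]
    · rw [Finset.range_add_one, Finset.filter_insert, if_neg h]
      exact ih

section Pos
variable {K X : Type*} [TopologicalSpace K] [CompactSpace K] [T2Space K]
  [ExtremallyDisconnected K]
  [NormedAddCommGroup X] [NormedSpace ℝ X] [CompleteSpace X]

lemma pos_ext (m : C(K, ℝ) →ₐ[ℝ] (X →L[ℝ] X)) (hm : ∀ a : C(K, ℝ), ‖m a‖ = ‖a‖)
    (x : X) (x' : X →L[ℝ] ℝ) {E : Set K} (hE : IsClopen E)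
    (hpos : ∀ V : Set K, IsClopen V → V ⊆ E → 0 ≤ x' (m (cind V) x))
    (a : C(K, ℝ)) (ha : 0 ≤ a) : 0 ≤ x' (m (a * cind E) x) := by
  classical
  set b : C(K, ℝ) := a * cind E with hb
  have ha' : ∀ y, 0 ≤ a y := fun y => by
    have := (ContinuousMap.le_def.1 ha) y; simpa using this
  have hb0 : ∀ y, 0 ≤ b y := by
    intro y
    simp only [hb, ContinuousMap.mul_apply]
    exact mul_nonneg (ha' y) ((ContinuousMap.le_def.1 (cind_nonneg hE)) y |>.trans_eq' (by simp))
  have hbE : ∀ y, y ∉ E → b y = 0 := fun y hy => by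
    simp [hb, ContinuousMap.mul_apply, cind_apply_of_not_mem hE hy]
  set M : ℝ := ‖a‖ + 1 with hMdef
  have hM : 0 < M := by positivity
  have hbM : ∀ y, b y ≤ M := by
    intro y
    by_cases hy : y ∈ E
    · have : b y = a y := by simp [hb, ContinuousMap.mul_apply, cind_apply_of_mem hE hy]
      rw [this]
      have := a.norm_coe_le_norm y
      rw [Real.norm_eq_abs] at this
      calc a y ≤ |a y| := le_abs_self _
        _ ≤ ‖a‖ := this
        _ ≤ M := by rw [hMdef]; linarith
    · rw [hbE y hy]; exact hM.le
  set C : ℝ := ‖x'‖ * ‖x‖ with hCdef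
  have hC : 0 ≤ C := by positivity
  have key : ∀ n : ℕ, -(C * M / ((n : ℝ) + 1)) ≤ x' (m b x) := by
    intro n
    set N : ℝ := (n : ℝ) + 1 with hNdef
    have hNpos : (0:ℝ) < N := by positivity
    set t : ℕ → ℝ := fun k => (k : ℝ) * M / N with htdef
    set V : ℕ → Set K := fun k => closure {y | t k < b y} with hVdef
    have hVclopen : ∀ k, IsClopen (V k) :=
      fun k => ⟨isClosed_closure,
        ExtremallyDisconnected.open_closure _ (isOpen_lt continuous_const b.continuous)⟩
    have ht_nonneg : ∀ k, 0 ≤ t k := fun k =>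
      div_nonneg (mul_nonneg (Nat.cast_nonneg k) hM.le) hNpos.le
    have hVsubE : ∀ k, V k ⊆ E := by
      intro k
      apply closure_minimal _ hE.isClosed
      intro y hy
      by_contra hyE
      rw [Set.mem_setOf_eq, hbE y hyE] at hy
      exact absurd hy (not_lt.2 (ht_nonneg k))
    have hVge : ∀ k y, y ∈ V k → t k ≤ b y := by
      intro k y hy
      have : V k ⊆ {y | t k ≤ b y} :=
        closure_minimal (fun z hz => le_of_lt (Set.mem_setOf_eq ▸ hz))
          (isClosed_le continuous_const b.continuous)
      exact this hy
    have hVanti : ∀ j k, j ≤ k → V k ⊆ V j := by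
      intro j k hjk
      apply closure_mono
      intro y hy
      rw [Set.mem_setOf_eq] at hy ⊢
      refine lt_of_le_of_lt ?_ hy
      simp only [htdef]
      gcongr
    set s : C(K, ℝ) := (M / N) • (Finset.range (n + 1)).sum (fun k => cind (V (k + 1))) with hsdef
    have hsval : ∀ y, s y = (M / N) *
        (((Finset.range (n + 1)).filter (fun k => y ∈ V (k + 1))).card : ℝ) := by
      intro y
      have h1 : s y = (M / N) * ((Finset.range (n + 1)).sum (fun k => cind (V (k + 1)))) y := by
        simp [hsdef]
      rw [h1, ContinuousMap.sum_apply]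
      congr 1
      rw [show ((Finset.range (n+1)).sum (fun k => cind (V (k+1)) y))
          = (Finset.range (n+1)).sum (fun k => if y ∈ V (k+1) then (1:ℝ) else 0) from
        Finset.sum_congr rfl (fun k _ => by
          by_cases hk : y ∈ V (k+1) <;>
            simp [cind_apply_of_mem (hVclopen (k+1)), cind_apply_of_not_mem (hVclopen (k+1)), hk])]
      rw [Finset.sum_boole]
    have hsb : ∀ y, s y ≤ b y ∧ b y ≤ s y + M / N := by
      intro y
      set c : ℕ := ((Finset.range (n + 1)).filter (fun k => y ∈ V (k + 1))).card with hcdef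
      have hcle : c ≤ n + 1 := by
        rw [hcdef]
        exact (Finset.card_filter_le _ _).trans_eq (Finset.card_range (n+1))
      have hfil : (Finset.range (n + 1)).filter (fun k => y ∈ V (k + 1)) = Finset.range c :=
        filter_downward (fun j k hjk hk => hVanti (j+1) (k+1) (by omega) hk)
      have hmem : ∀ k, k < n + 1 → (y ∈ V (k + 1) ↔ k < c) := by
        intro k hk
        constructor
        · intro hyk
          have : k ∈ (Finset.range (n + 1)).filter (fun k => y ∈ V (k + 1)) :=
            Finset.mem_filter.2 ⟨Finset.mem_range.2 hk, hyk⟩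
          rw [hfil] at this
          exact Finset.mem_range.1 this
        · intro hkc
          have : k ∈ Finset.range c := Finset.mem_range.2 hkc
          rw [← hfil] at this
          exact (Finset.mem_filter.1 this).2
      have hsy : s y = (M / N) * c := hsval y
      constructor
      · rcases Nat.eq_zero_or_pos c with hc0 | hcpos
        · rw [hsy, hc0]
          simpa using hb0 y
        · have hc1 : c - 1 < n + 1 := by omega
          have : y ∈ V ((c - 1) + 1) := (hmem (c-1) hc1).2 (by omega)
          have hcc : (c - 1) + 1 = c := by omega
          rw [hcc] at this
          have := hVge c y this
          rw [hsy]
          calc (M / N) * c = (c : ℝ) * M / N := by ring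
            _ ≤ b y := this
      · by_cases hcn : c = n + 1
        · have : s y = M := by
            rw [hsy, hcn]
            push_cast
            field_simp
            exact hNdef.symm
          rw [this]
          have := hbM y
          have hMN : 0 ≤ M / N := div_nonneg hM.le hNpos.le
          linarith
        · have hclt : c < n + 1 := lt_of_le_of_ne hcle hcn
          have hyc : y ∉ V (c + 1) := fun hyc => absurd ((hmem c hclt).1 hyc) (lt_irrefl c)
          have : ¬ (t (c + 1) < b y) := fun hlt => hyc (subset_closure hlt)
          push_neg at this
          rw [hsy]
          calc b y ≤ t (c+1) := this
            _ = (M / N) * c + M / N := by simp only [htdef]; push_cast; ring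
      -- end hsb
    have hs_mu : 0 ≤ x' (m s x) := by
      have heq : x' (m s x) = (M / N) *
          (Finset.range (n + 1)).sum (fun k => x' (m (cind (V (k + 1))) x)) := by
        have h1 : x' (m s x) = muLin m x x' s := rfl
        rw [h1, hsdef, map_smul, map_sum]
        simp [muLin, smul_eq_mul]
      rw [heq]
      refine mul_nonneg (div_nonneg hM.le hNpos.le) (Finset.sum_nonneg fun k _ => ?_)
      exact hpos (V (k + 1)) (hVclopen (k + 1)) (hVsubE (k + 1))
    have hdiff : ‖b - s‖ ≤ M / N := by
      rw [ContinuousMap.norm_le _ (div_nonneg hM.le hNpos.le)]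
      intro y
      rw [ContinuousMap.sub_apply, Real.norm_eq_abs, abs_le]
      have := hsb y
      have hMN : 0 ≤ M / N := div_nonneg hM.le hNpos.le
      constructor <;> linarith [this.1, this.2]
    have hsplit : x' (m b x) = x' (m s x) + x' (m (b - s) x) := by
      have h1 : (s + (b - s) : C(K, ℝ)) = b := by ring
      calc x' (m b x) = muLin m x x' (s + (b - s)) := by rw [h1]; rfl
        _ = muLin m x x' s + muLin m x x' (b - s) := map_add _ _ _
        _ = x' (m s x) + x' (m (b - s) x) := rfl
    have habs := mu_bound m hm x x' (b - s)
    have hCb : |x' (m (b - s) x)| ≤ C * (M / N) := by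
      calc |x' (m (b - s) x)| ≤ ‖x'‖ * ‖x‖ * ‖b - s‖ := habs
        _ ≤ C * (M / N) := by rw [hCdef]; exact mul_le_mul_of_nonneg_left hdiff hC
    have := abs_le.1 hCb
    rw [hsplit]
    have hCMN : C * (M / N) = C * M / N := by ring
    rw [hNdef] at *
    linarith [this.1, hs_mu, hCMN]
  -- conclude by limit
  have hlim : Filter.Tendsto (fun n : ℕ => -(C * M / ((n : ℝ) + 1))) Filter.atTop (nhds 0) := by
    rw [show (0:ℝ) = -0 by norm_num]
    apply Filter.Tendsto.neg
    have := tendsto_const_div_atTop_nhds_zero_nat (C * M)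
    have hcomp := this.comp (Filter.tendsto_add_atTop_nat 1)
    simp only [Function.comp_def, Nat.cast_add, Nat.cast_one] at hcomp
    exact hcomp
  exact le_of_tendsto' hlim key

end Pos

section Sum
variable {K : Type*} [TopologicalSpace K]

lemma cind_sum (F : Finset (Set K)) (hcl : ∀ W ∈ F, IsClopen W)
    (hdisj : (↑F : Set (Set K)).PairwiseDisjoint id) :
    cind (⋃₀ (↑F : Set (Set K))) = ∑ W ∈ F, cind W := by
  classical
  induction F using Finset.induction_on with
  | empty => simp [cind_empty]
  | insert _ _ hnotmem =>
    rename_i a F ih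
    have hclF : ∀ W ∈ F, IsClopen W := fun W hW => hcl W (Finset.mem_insert_of_mem hW)
    have hdisjF : (↑F : Set (Set K)).PairwiseDisjoint id :=
      hdisj.subset (by simp [Finset.coe_insert, Set.subset_insert])
    have hsU : IsClopen (⋃₀ (↑F : Set (Set K))) := by
      rw [Set.sUnion_eq_biUnion]
      exact F.finite_toSet.isClopen_biUnion hclF
    have hda : Disjoint a (⋃₀ (↑F : Set (Set K))) := by
      rw [Set.disjoint_sUnion_right]
      intro t ht
      exact hdisj (by simp) (by simp [ht]) (fun h => hnotmem (h ▸ ht))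
    rw [Finset.coe_insert, Set.sUnion_insert,
      cind_union (hcl a (Finset.mem_insert_self a F)) hsU hda,
      ih hclF hdisjF, Finset.sum_insert hnotmem]

end Sum

/-- Jordan decomposition of `μ(a) = x'(m a x)` by an idempotent: there is an idempotent
`e₊` such that `a ↦ x'(m (a e₊) x)` and `a ↦ -x'(m (a(1-e₊)) x)` are positive, and the
first realizes the positive part `μ⁺` of `μ`. -/
theorem stmt15 {K X : Type*} [TopologicalSpace K] [CompactSpace K] [T2Space K]
    [ExtremallyDisconnected K]
    [NormedAddCommGroup X] [NormedSpace ℝ X] [CompleteSpace X]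
    (m : C(K, ℝ) →ₐ[ℝ] (X →L[ℝ] X))
    (hm : ∀ a : C(K, ℝ), ‖m a‖ = ‖a‖)
    (hBade : BadeComplete m)
    (x : X) (x' : X →L[ℝ] ℝ) :
    ∃ e : C(K, ℝ), e * e = e ∧
      (∀ a : C(K, ℝ), 0 ≤ a → 0 ≤ x' (m (a * e) x)) ∧
      (∀ a : C(K, ℝ), 0 ≤ a → x' (m (a * (1 - e)) x) ≤ 0) ∧
      (∀ a : C(K, ℝ), 0 ≤ a →
        x' (m (a * e) x) =
          sSup {r : ℝ | ∃ b : C(K, ℝ), 0 ≤ b ∧ b ≤ a ∧ r = x' (m b x)}) := by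
  classical
  have lam_empty : x' (m (cind (∅ : Set K)) x) = 0 := by
    simp [cind_empty, map_zero]
  have lam_union : ∀ {U V : Set K}, IsClopen U → IsClopen V → Disjoint U V →
      x' (m (cind (U ∪ V)) x) = x' (m (cind U) x) + x' (m (cind V) x) := by
    intro U V hU hV hd
    have h1 : cind (U ∪ V) = cind U + cind V := cind_union hU hV hd
    rw [h1, map_add]
    simp
  set 𝒞 : Set (Set K) := {U | IsClopen U ∧
    ∀ V : Set K, IsClopen V → V ⊆ U → 0 ≤ x' (m (cind V) x)} with h𝒞
  have hCne : (∅ : Set K) ∈ 𝒞 := ⟨isClopen_empty, fun V hV hVsub => by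
    rw [Set.subset_empty_iff.1 hVsub, lam_empty]⟩
  have hCcl : ∀ U ∈ 𝒞, IsClopen U := fun U hU => hU.1
  have hCunion : ∀ U₁ ∈ 𝒞, ∀ U₂ ∈ 𝒞, U₁ ∪ U₂ ∈ 𝒞 := by
    rintro U₁ ⟨h1, p1⟩ U₂ ⟨h2, p2⟩
    refine ⟨h1.union h2, fun V hV hVsub => ?_⟩
    have hdecomp : V = (V ∩ U₁) ∪ ((V ∩ U₂) ∩ U₁ᶜ) := by
      ext z
      simp only [Set.mem_union, Set.mem_inter_iff, Set.mem_compl_iff]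
      constructor
      · intro hz
        rcases hVsub hz with h | h
        · exact Or.inl ⟨hz, h⟩
        · by_cases hz1 : z ∈ U₁
          · exact Or.inl ⟨hz, hz1⟩
          · exact Or.inr ⟨⟨hz, h⟩, hz1⟩
      · rintro (⟨h, _⟩ | ⟨⟨h, _⟩, _⟩) <;> exact h
    have c1 : IsClopen (V ∩ U₁) := hV.inter h1
    have c2 : IsClopen ((V ∩ U₂) ∩ U₁ᶜ) := (hV.inter h2).inter h1.compl
    have hd : Disjoint (V ∩ U₁) ((V ∩ U₂) ∩ U₁ᶜ) :=
      Set.disjoint_left.2 (fun z hz hz' => hz'.2 hz.2)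
    have heq := lam_union c1 c2 hd
    have g1 := p1 (V ∩ U₁) c1 Set.inter_subset_right
    have g2 := p2 ((V ∩ U₂) ∩ U₁ᶜ) c2 (Set.inter_subset_left.trans Set.inter_subset_right)
    calc (0:ℝ) ≤ x' (m (cind (V ∩ U₁)) x) + x' (m (cind ((V ∩ U₂) ∩ U₁ᶜ)) x) := by linarith
      _ = x' (m (cind ((V ∩ U₁) ∪ ((V ∩ U₂) ∩ U₁ᶜ))) x) := heq.symm
      _ = x' (m (cind V) x) := by rw [← hdecomp]
  have hCdir : DirectedOn (· ⊆ ·) 𝒞 := fun U₁ h1 U₂ h2 =>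
    ⟨U₁ ∪ U₂, hCunion U₁ h1 U₂ h2, Set.subset_union_left, Set.subset_union_right⟩
  set E : Set K := closure (⋃₀ 𝒞) with hEdef
  have hEclopen : IsClopen E :=
    ⟨isClosed_closure, ExtremallyDisconnected.open_closure _
      (isOpen_sUnion (fun U hU => (hCcl U hU).isOpen))⟩
  -- every clopen subset of E has nonnegative lam
  have hEpos : ∀ V : Set K, IsClopen V → V ⊆ E → 0 ≤ x' (m (cind V) x) := by
    intro V hV hVE
    set 𝒟 : Set (Set K) := (fun U => V ∩ U) '' 𝒞 with h𝒟
    have hDne : 𝒟.Nonempty := ⟨V ∩ ∅, ⟨∅, hCne, rfl⟩⟩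
    have hDcl : ∀ W ∈ 𝒟, IsClopen W := by rintro W ⟨U, hU, rfl⟩; exact hV.inter (hCcl U hU)
    have hDdir : DirectedOn (· ⊆ ·) 𝒟 := by
      rintro W₁ ⟨U₁, hU₁, rfl⟩ W₂ ⟨U₂, hU₂, rfl⟩
      obtain ⟨U₃, hU₃, s1, s2⟩ := hCdir U₁ hU₁ U₂ hU₂
      exact ⟨V ∩ U₃, ⟨U₃, hU₃, rfl⟩, Set.inter_subset_inter_right V s1,
        Set.inter_subset_inter_right V s2⟩
    have hsU : ⋃₀ 𝒟 = V ∩ ⋃₀ 𝒞 := by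
      ext z
      simp only [h𝒟, Set.sUnion_image, Set.mem_iUnion, Set.mem_inter_iff, Set.mem_sUnion]
      tauto
    have hclos : closure (⋃₀ 𝒟) = V := by
      rw [hsU, closure_inter_clopen hV, ← hEdef]
      exact Set.inter_eq_self_of_subset_left hVE
    have hc : ∀ W ∈ 𝒟, (0:ℝ) ≤ x' (m (cind W) x) := by
      rintro W ⟨U, hU, rfl⟩
      exact hU.2 (V ∩ U) (hV.inter (hCcl U hU)) Set.inter_subset_right
    have hnet := bade_net m hBade x x' 0 𝒟 hDne hDcl hDdir (by rw [hclos]; exact hV) hc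
    rwa [hclos] at hnet
  -- every clopen subset of Eᶜ has nonpositive lam
  have hEneg : ∀ V : Set K, IsClopen V → V ⊆ Eᶜ → x' (m (cind V) x) ≤ 0 := by
    intro V hV hVE
    by_contra hposV
    push_neg at hposV
    set P : Set (Set (Set K)) := {D | (∀ W ∈ D, IsClopen W ∧ W ⊆ V ∧ x' (m (cind W) x) < 0)
      ∧ D.PairwiseDisjoint id} with hP
    have hzorn : ∃ D, Maximal (· ∈ P) D := by
      apply zorn_subset
      intro ch hch hchain
      refine ⟨⋃₀ ch, ⟨?_, ?_⟩, fun s hs => Set.subset_sUnion_of_mem hs⟩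
      · rintro W ⟨D, hD, hWD⟩; exact (hch hD).1 W hWD
      · rintro W ⟨D₁, hD₁, hW⟩ W' ⟨D₂, hD₂, hW'⟩ hne
        rcases hchain.total hD₁ hD₂ with h | h
        · exact (hch hD₂).2 (h hW) hW' hne
        · exact (hch hD₁).2 hW (h hW') hne
    obtain ⟨D, hDP, hDmaximal⟩ := hzorn
    obtain ⟨hDmem, hDdisj⟩ := hDP
    have hDmax : ∀ D' ∈ P, D ⊆ D' → D' = D := fun D' hD' hsub =>
      subset_antisymm (hDmaximal hD' hsub) hsub
    set G : Set K := closure (⋃₀ D) with hG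
    have hGclopen : IsClopen G := ⟨isClosed_closure, ExtremallyDisconnected.open_closure _
      (isOpen_sUnion fun W hW => (hDmem W hW).1.isOpen)⟩
    have hGsubV : G ⊆ V :=
      closure_minimal (Set.sUnion_subset fun W hW => (hDmem W hW).2.1) hV.isClosed
    have hGle : x' (m (cind G) x) ≤ 0 := by
      set 𝒟 : Set (Set K) := {A | ∃ F : Finset (Set K), ↑F ⊆ D ∧ A = ⋃₀ (↑F : Set (Set K))}
        with h𝒟
      have hDne : 𝒟.Nonempty := ⟨∅, ∅, by simp, by simp⟩
      have hDcl : ∀ A ∈ 𝒟, IsClopen A := by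
        rintro A ⟨F, hF, rfl⟩
        rw [Set.sUnion_eq_biUnion]
        exact F.finite_toSet.isClopen_biUnion (fun W hW => (hDmem W (hF hW)).1)
      have hDdir : DirectedOn (· ⊆ ·) 𝒟 := by
        rintro A₁ ⟨F₁, hF₁, rfl⟩ A₂ ⟨F₂, hF₂, rfl⟩
        refine ⟨⋃₀ (↑(F₁ ∪ F₂) : Set (Set K)), ⟨F₁ ∪ F₂, ?_, rfl⟩, ?_, ?_⟩
        · rw [Finset.coe_union]; exact Set.union_subset hF₁ hF₂
        · apply Set.sUnion_subset_sUnion; rw [Finset.coe_union]; exact Set.subset_union_left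
        · apply Set.sUnion_subset_sUnion; rw [Finset.coe_union]; exact Set.subset_union_right
      have hsU0 : ⋃₀ 𝒟 = ⋃₀ D := by
        apply subset_antisymm
        · refine Set.sUnion_subset ?_
          rintro A ⟨F, hF, rfl⟩
          exact Set.sUnion_subset_sUnion hF
        · refine Set.sUnion_subset ?_
          intro W hW
          refine Set.subset_sUnion_of_mem (⟨{W}, by simpa using hW, by simp⟩ : W ∈ 𝒟)
      have hsU : closure (⋃₀ 𝒟) = G := by rw [hG, hsU0]
      have hneg : ∀ A ∈ 𝒟, (0:ℝ) ≤ (-x') (m (cind A) x) := by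
        rintro A ⟨F, hF, rfl⟩
        have hclF : ∀ W ∈ F, IsClopen W := fun W hW => (hDmem W (hF hW)).1
        have hdisjF : (↑F : Set (Set K)).PairwiseDisjoint id := hDdisj.subset hF
        have hsum : x' (m (cind (⋃₀ (↑F : Set (Set K)))) x)
            = ∑ W ∈ F, x' (m (cind W) x) := by
          have h1 : x' (m (cind (⋃₀ (↑F : Set (Set K)))) x)
              = muLin m x x' (∑ W ∈ F, cind W) := by
            rw [← cind_sum F hclF hdisjF]; rfl
          rw [h1, map_sum]; rfl
        simp only [ContinuousLinearMap.neg_apply]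
        rw [hsum]
        have : ∑ W ∈ F, x' (m (cind W) x) ≤ 0 :=
          Finset.sum_nonpos (fun W hW => ((hDmem W (hF hW)).2.2).le)
        linarith
      have hnet := bade_net m hBade x (-x') 0 𝒟 hDne hDcl hDdir
        (by rw [hsU]; exact hGclopen) hneg
      rw [hsU] at hnet
      simp only [ContinuousLinearMap.neg_apply] at hnet
      linarith
    set A : Set K := V ∩ Gᶜ with hA
    have hAclopen : IsClopen A := hV.inter hGclopen.compl
    have hVdecomp : A ∪ G = V := by
      rw [hA]
      ext z
      simp only [Set.mem_union, Set.mem_inter_iff, Set.mem_compl_iff]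
      constructor
      · rintro (⟨h, _⟩ | h)
        · exact h
        · exact hGsubV h
      · intro hz
        by_cases hzG : z ∈ G
        · exact Or.inr hzG
        · exact Or.inl ⟨hz, hzG⟩
    have hdAG : Disjoint A G := Set.disjoint_left.2 (fun z hz hz' => hz.2 hz')
    have hlamA : 0 < x' (m (cind A) x) := by
      have heq := lam_union hAclopen hGclopen hdAG
      rw [hVdecomp] at heq
      linarith
    have hAin𝒞 : A ∈ 𝒞 := by
      refine ⟨hAclopen, fun W hW hWA => ?_⟩
      by_contra hWneg
      push_neg at hWneg
      have hWD : insert W D ∈ P := by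
        constructor
        · rintro W' hW'
          rcases Set.mem_insert_iff.1 hW' with rfl | hW''
          · exact ⟨hW, hWA.trans Set.inter_subset_left, hWneg⟩
          · exact hDmem W' hW''
        · apply Set.PairwiseDisjoint.insert hDdisj
          intro W' hW' _
          have h1 : W' ⊆ G := (Set.subset_sUnion_of_mem hW').trans subset_closure
          have h2 : W ⊆ Gᶜ := hWA.trans Set.inter_subset_right
          exact Set.disjoint_left.2 fun z hz hz' => (h2 hz) (h1 hz')
      have heq := hDmax _ hWD (Set.subset_insert W D)
      have hWinD : W ∈ D := heq ▸ Set.mem_insert W D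
      have h1 : W ⊆ G := (Set.subset_sUnion_of_mem hWinD).trans subset_closure
      have h2 : W ⊆ Gᶜ := hWA.trans Set.inter_subset_right
      have hWempty : W = ∅ := by
        ext z; exact ⟨fun hz => absurd (h1 hz) (h2 hz), False.elim⟩
      rw [hWempty, lam_empty] at hWneg
      exact lt_irrefl 0 hWneg
    have hAsubE : A ⊆ E := (Set.subset_sUnion_of_mem hAin𝒞).trans subset_closure
    have hAsubEc : A ⊆ Eᶜ := Set.inter_subset_left.trans hVE
    have hAempty : A = ∅ := by
      ext z; exact ⟨fun hz => absurd (hAsubE hz) (hAsubEc hz), False.elim⟩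
    rw [hAempty, lam_empty] at hlamA
    exact lt_irrefl 0 hlamA
  -- assemble
  have hP1 : ∀ a : C(K, ℝ), 0 ≤ a → 0 ≤ x' (m (a * cind E) x) :=
    fun a ha => pos_ext m hm x x' hEclopen hEpos a ha
  have hP2 : ∀ a : C(K, ℝ), 0 ≤ a → x' (m (a * (1 - cind E)) x) ≤ 0 := by
    intro a ha
    have h1 : (1 : C(K, ℝ)) - cind E = cind Eᶜ := (cind_compl hEclopen).symm
    rw [h1]
    have hneg' : ∀ V : Set K, IsClopen V → V ⊆ Eᶜ → 0 ≤ (-x') (m (cind V) x) := by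
      intro V hV hVE
      simp only [ContinuousLinearMap.neg_apply]
      linarith [hEneg V hV hVE]
    have := pos_ext m hm x (-x') hEclopen.compl hneg' a ha
    simp only [ContinuousLinearMap.neg_apply] at this
    linarith
  refine ⟨cind E, cind_idem hEclopen, hP1, hP2, ?_⟩
  intro a ha
  have ha' : ∀ y, 0 ≤ a y := fun y => by
    have := (ContinuousMap.le_def.1 ha) y; simpa using this
  have he0 : ∀ y, 0 ≤ cind E y := fun y =>
    by have := (ContinuousMap.le_def.1 (cind_nonneg hEclopen)) y; simpa using this
  have he1 : ∀ y, cind E y ≤ 1 := fun y =>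
    by have := (ContinuousMap.le_def.1 (cind_le_one hEclopen)) y; simpa using this
  have hmem : x' (m (a * cind E) x) ∈
      {r : ℝ | ∃ b : C(K, ℝ), 0 ≤ b ∧ b ≤ a ∧ r = x' (m b x)} := by
    refine ⟨a * cind E, ?_, ?_, rfl⟩
    · rw [ContinuousMap.le_def]
      intro y
      simpa using mul_nonneg (ha' y) (he0 y)
    · rw [ContinuousMap.le_def]
      intro y
      simpa using mul_le_of_le_one_right (ha' y) (he1 y)
  have hub : ∀ r ∈ {r : ℝ | ∃ b : C(K, ℝ), 0 ≤ b ∧ b ≤ a ∧ r = x' (m b x)},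
      r ≤ x' (m (a * cind E) x) := by
    rintro r ⟨b, hb0, hba, rfl⟩
    have hdec : x' (m b x) = x' (m (b * cind E) x) + x' (m (b * (1 - cind E)) x) := by
      have h1 : (b * cind E + b * (1 - cind E) : C(K, ℝ)) = b := by ring
      calc x' (m b x) = muLin m x x' (b * cind E + b * (1 - cind E)) := by rw [h1]; rfl
        _ = muLin m x x' (b * cind E) + muLin m x x' (b * (1 - cind E)) := map_add _ _ _
        _ = x' (m (b * cind E) x) + x' (m (b * (1 - cind E)) x) := rfl
    have hble : x' (m (b * (1 - cind E)) x) ≤ 0 := hP2 b hb0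
    have hmono : x' (m (b * cind E) x) ≤ x' (m (a * cind E) x) := by
      have hab : (0 : C(K, ℝ)) ≤ a - b := by
        rw [ContinuousMap.le_def]
        intro y
        have := (ContinuousMap.le_def.1 hba) y
        simpa using this
      have h := hP1 (a - b) hab
      have h2 : ((a - b) * cind E : C(K, ℝ)) = a * cind E - b * cind E := by ring
      have h3 : x' (m ((a - b) * cind E) x)
          = x' (m (a * cind E) x) - x' (m (b * cind E) x) := by
        rw [h2]
        calc x' (m (a * cind E - b * cind E) x)
            = muLin m x x' (a * cind E - b * cind E) := rfl
          _ = muLin m x x' (a * cind E) - muLin m x x' (b * cind E) := map_sub _ _ _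
          _ = _ := rfl
      linarith
    linarith
  exact (IsGreatest.csSup_eq ⟨hmem, hub⟩).symm
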